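/- Let S be an injective unilateral weighted shift with non-negative bounded weights and positive weights (none zero). The quasi-nilpotent part H₀(S) = {x : lim ‖Sⁿx‖^{1/n} = 0} is dense in H if and only if r₃(S) = limsup (ω_0⋯ω_{n-1})^{1/n} = 0; moreover, S has property (Q) (i.e., H₀(S−λ) is closed for every λ ∈ ℂ) if and only if either S is quasi-nilpotent or r₃(S) > 0. -/

import Mathlib

open Filter

section Defs

variable {X : Type*} [NormedAddCommGroup X] [NormedSpace ℂ X]

/-- The quasi-nilpotent part of an operator `T`:
`H₀(T) = {x : lim ‖Tⁿ x‖^(1/n) = 0}`. -/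
def quasiNilpotentPart (T : X →L[ℂ] X) : Set X :=
  {x : X | Tendsto (fun n : ℕ => ‖(T ^ n) x‖ ^ ((n : ℝ)⁻¹)) atTop (nhds 0)}

/-- Property (Q): the quasi-nilpotent part of `T - λ` is closed for every `λ`. -/
def PropertyQ (T : X →L[ℂ] X) : Prop :=
  ∀ μ : ℂ, IsClosed (quasiNilpotentPart (T - μ • (1 : X →L[ℂ] X)))

end Defs

open Finset


section RpowAux

lemma aux_rpow_inv_tendsto_one {a : ℝ} (ha : 0 < a) :
    Tendsto (fun n : ℕ => a ^ ((n : ℝ)⁻¹)) atTop (nhds 1) := by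
  have h1 : Tendsto (fun n : ℕ => ((n : ℝ)⁻¹)) atTop (nhds 0) :=
    tendsto_inv_atTop_zero.comp tendsto_natCast_atTop_atTop
  have h2 : ContinuousAt (fun p : ℝ × ℝ => p.1 ^ p.2) (a, 0) :=
    Real.continuousAt_rpow (a, 0) (Or.inl ha.ne')
  have := h2.tendsto.comp (Tendsto.prodMk_nhds (tendsto_const_nhds (x := a)) h1)
  simpa [Real.rpow_zero, Function.comp_def] using this

lemma aux_pow_rpow {a : ℝ} (ha : 0 ≤ a) {n : ℕ} (hn : n ≠ 0) :
    (a ^ n) ^ ((n : ℝ)⁻¹) = a := by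
  rw [← Real.rpow_natCast a n, ← Real.rpow_mul ha,
    mul_inv_cancel₀ (by exact_mod_cast hn), Real.rpow_one]

lemma aux_rpow_inv_pow {a : ℝ} (ha : 0 ≤ a) {n : ℕ} (hn : n ≠ 0) :
    (a ^ ((n : ℝ)⁻¹)) ^ n = a := by
  rw [← Real.rpow_natCast _ n, ← Real.rpow_mul ha,
    inv_mul_cancel₀ (by exact_mod_cast hn), Real.rpow_one]

/-- If `b (k+n) ^ (1/n) → 0` then `b m ^ (1/m) → 0`, and conversely,
for a positive sequence `b`. -/
lemma aux_shift {b : ℕ → ℝ} (hb : ∀ m, 0 < b m) (k : ℕ) :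
    Tendsto (fun n : ℕ => b (k + n) ^ ((n : ℝ)⁻¹)) atTop (nhds 0) ↔
    Tendsto (fun m : ℕ => b m ^ ((m : ℝ)⁻¹)) atTop (nhds 0) := by
  constructor
  · intro h
    rw [← tendsto_add_atTop_iff_nat k]
    have hrhs : Tendsto (fun n : ℕ => (b (k + n) ^ ((n : ℝ)⁻¹)) ^ ((2:ℝ)⁻¹))
        atTop (nhds 0) := by
      have hc : ContinuousAt (fun t : ℝ => t ^ ((2:ℝ)⁻¹)) 0 :=
        Real.continuousAt_rpow_const 0 _ (Or.inr (by norm_num))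
      have := hc.tendsto.comp h
      simpa [Function.comp_def, Real.zero_rpow (by norm_num : ((2:ℝ)⁻¹) ≠ 0)] using this
    have hev : ∀ᶠ n : ℕ in atTop,
        b (k + n) ^ (((k + n : ℕ) : ℝ)⁻¹) ≤ (b (k + n) ^ ((n : ℝ)⁻¹)) ^ ((2:ℝ)⁻¹) := by
      have h1 : ∀ᶠ n : ℕ in atTop, b (k + n) ^ ((n : ℝ)⁻¹) ≤ 1 :=
        h.eventually_le_const (by norm_num)
      filter_upwards [h1, eventually_ge_atTop (max 1 k)] with n hn1 hn2
      have hn1' : 1 ≤ n := le_of_max_le_left hn2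
      have hnk : k ≤ n := le_of_max_le_right hn2
      have hnpos : (0:ℝ) < (n:ℝ) := by exact_mod_cast hn1'
      have hc0 : 0 < b (k + n) ^ ((n : ℝ)⁻¹) := Real.rpow_pos_of_pos (hb _) _
      have heq : b (k + n) ^ (((k + n : ℕ) : ℝ)⁻¹)
          = (b (k + n) ^ ((n : ℝ)⁻¹)) ^ ((n : ℝ) * (((k + n : ℕ) : ℝ))⁻¹) := by
        rw [← Real.rpow_mul (hb _).le]
        congr 1
        field_simp
      rw [heq]
      refine Real.rpow_le_rpow_of_exponent_ge hc0 hn1 ?_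
      rw [← one_div, ← div_eq_mul_inv, div_le_div_iff₀ (by norm_num)
        (by positivity : (0:ℝ) < ((k + n : ℕ) : ℝ))]
      push_cast
      have : (k:ℝ) ≤ (n:ℝ) := by exact_mod_cast hnk
      linarith
    have h0 : ∀ᶠ n : ℕ in atTop, 0 ≤ b (k + n) ^ (((k + n : ℕ) : ℝ)⁻¹) :=
      Eventually.of_forall fun n => Real.rpow_nonneg (hb _).le _
    have := squeeze_zero' h0 hev hrhs
    exact this.congr fun n => by rw [Nat.add_comm k n]
  · intro h
    have h' : Tendsto (fun n : ℕ => b (k + n) ^ (((k + n : ℕ) : ℝ)⁻¹)) atTop (nhds 0) := by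
      have := (tendsto_add_atTop_iff_nat k).mpr h
      exact this.congr fun n => by rw [Nat.add_comm n k]
    have hev : ∀ᶠ n : ℕ in atTop,
        b (k + n) ^ ((n : ℝ)⁻¹) ≤ b (k + n) ^ (((k + n : ℕ) : ℝ)⁻¹) := by
      have h1 : ∀ᶠ n : ℕ in atTop, b (k + n) ^ (((k + n : ℕ) : ℝ)⁻¹) ≤ 1 :=
        h'.eventually_le_const (by norm_num)
      filter_upwards [h1, eventually_ge_atTop 1] with n hn1 hn2
      have hble : b (k + n) ≤ 1 := by
        have := pow_le_one₀ (Real.rpow_nonneg (hb _).le _) hn1 (n := k + n)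
        rwa [aux_rpow_inv_pow (hb _).le (by omega)] at this
      refine Real.rpow_le_rpow_of_exponent_ge (hb _) hble ?_
      refine inv_anti₀ (show (0:ℝ) < (n:ℝ) by exact_mod_cast hn2) ?_
      exact_mod_cast Nat.le_add_left n k
    exact squeeze_zero' (Eventually.of_forall fun n => Real.rpow_nonneg (hb _).le _) hev h'

end RpowAux

section Hilbert

variable {H : Type*} [NormedAddCommGroup H] [InnerProductSpace ℂ H] [CompleteSpace H]

local notation "⟪" x ", " y "⟫" => @inner ℂ _ _ x y

lemma aux_dense_span (e : HilbertBasis ℕ ℂ H) :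
    Dense (Submodule.span ℂ (Set.range (e : ℕ → H)) : Set H) :=
  Submodule.dense_iff_topologicalClosure_eq_top.mpr e.dense_span

lemma aux_inner_basis (e : HilbertBasis ℕ ℂ H) (i j : ℕ) :
    ⟪e i, e j⟫ = if i = j then (1:ℂ) else 0 :=
  orthonormal_iff_ite.mp e.orthonormal i j

/-- If all coordinates vanish, the vector is zero. -/
lemma aux_eq_zero (e : HilbertBasis ℕ ℂ H) {x : H} (h : ∀ k, ⟪e k, x⟫ = 0) : x = 0 := by
  have hfg : (innerSL ℂ x : H →L[ℂ] ℂ) = 0 := by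
    refine ContinuousLinearMap.ext_on (aux_dense_span e) ?_
    rintro _ ⟨j, rfl⟩
    simp only [innerSL_apply_apply, ContinuousLinearMap.zero_apply]
    rw [← inner_conj_symm, h j, map_zero]
  have : ⟪x, x⟫ = 0 := by
    have := congrArg (fun f : H →L[ℂ] ℂ => f x) hfg
    simpa using this
  exact inner_self_eq_zero.mp this

/-- `0` belongs to the quasi-nilpotent part. -/
lemma aux_zero_mem (T : H →L[ℂ] H) : (0 : H) ∈ quasiNilpotentPart T := by
  unfold quasiNilpotentPart
  rw [Set.mem_setOf_eq]
  have hcg : (fun n : ℕ => ‖(T ^ n) (0:H)‖ ^ ((n : ℝ)⁻¹)) =ᶠ[atTop] (fun _ : ℕ => (0:ℝ)) := by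
    filter_upwards [eventually_ge_atTop 1] with n hn
    rw [map_zero, norm_zero, Real.zero_rpow]
    positivity
  rw [tendsto_congr' hcg]
  exact tendsto_const_nhds

lemma aux_add_mem (T : H →L[ℂ] H) {x y : H} (hx : x ∈ quasiNilpotentPart T)
    (hy : y ∈ quasiNilpotentPart T) : x + y ∈ quasiNilpotentPart T := by
  unfold quasiNilpotentPart at *
  rw [Set.mem_setOf_eq] at *
  have hb : ∀ n : ℕ, ‖(T ^ n) (x + y)‖ ^ ((n : ℝ)⁻¹) ≤
      (2:ℝ) ^ ((n : ℝ)⁻¹) * (‖(T ^ n) x‖ ^ ((n : ℝ)⁻¹) + ‖(T ^ n) y‖ ^ ((n : ℝ)⁻¹)) := by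
    intro n
    have h1 : ‖(T ^ n) (x + y)‖ ≤ 2 * max ‖(T ^ n) x‖ ‖(T ^ n) y‖ := by
      rw [map_add]
      calc ‖(T ^ n) x + (T ^ n) y‖ ≤ ‖(T ^ n) x‖ + ‖(T ^ n) y‖ := norm_add_le _ _
        _ ≤ 2 * max ‖(T ^ n) x‖ ‖(T ^ n) y‖ := by
            rw [two_mul]
            exact add_le_add (le_max_left _ _) (le_max_right _ _)
    calc ‖(T ^ n) (x + y)‖ ^ ((n : ℝ)⁻¹)
        ≤ (2 * max ‖(T ^ n) x‖ ‖(T ^ n) y‖) ^ ((n : ℝ)⁻¹) :=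
          Real.rpow_le_rpow (norm_nonneg _) h1 (by positivity)
      _ = (2:ℝ) ^ ((n : ℝ)⁻¹) * (max ‖(T ^ n) x‖ ‖(T ^ n) y‖) ^ ((n : ℝ)⁻¹) :=
          Real.mul_rpow (by norm_num) (le_max_of_le_left (norm_nonneg _))
      _ ≤ (2:ℝ) ^ ((n : ℝ)⁻¹) * (‖(T ^ n) x‖ ^ ((n : ℝ)⁻¹) + ‖(T ^ n) y‖ ^ ((n : ℝ)⁻¹)) := by
          refine mul_le_mul_of_nonneg_left ?_ (by positivity)
          rcases max_cases ‖(T ^ n) x‖ ‖(T ^ n) y‖ with ⟨hm, _⟩ | ⟨hm, _⟩ <;> rw [hm]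
          · exact le_add_of_nonneg_right (by positivity)
          · exact le_add_of_nonneg_left (by positivity)
  have hlim : Tendsto (fun n : ℕ =>
      (2:ℝ) ^ ((n : ℝ)⁻¹) * (‖(T ^ n) x‖ ^ ((n : ℝ)⁻¹) + ‖(T ^ n) y‖ ^ ((n : ℝ)⁻¹)))
      atTop (nhds 0) := by
    have := (aux_rpow_inv_tendsto_one (by norm_num : (0:ℝ) < 2)).mul (hx.add hy)
    simpa using this
  exact squeeze_zero (fun n => by positivity) hb hlim

lemma aux_smul_mem (T : H →L[ℂ] H) (c : ℂ) {x : H} (hx : x ∈ quasiNilpotentPart T) :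
    c • x ∈ quasiNilpotentPart T := by
  rcases eq_or_ne c 0 with rfl | hc
  · simpa using aux_zero_mem T
  unfold quasiNilpotentPart at *
  rw [Set.mem_setOf_eq] at *
  have heq : ∀ n : ℕ, ‖(T ^ n) (c • x)‖ ^ ((n : ℝ)⁻¹)
      = ‖c‖ ^ ((n : ℝ)⁻¹) * ‖(T ^ n) x‖ ^ ((n : ℝ)⁻¹) := by
    intro n
    rw [map_smul, norm_smul, Real.mul_rpow (norm_nonneg _) (norm_nonneg _)]
  rw [tendsto_congr heq]
  have := (aux_rpow_inv_tendsto_one (norm_pos_iff.mpr hc)).mul hx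
  simpa using this

end Hilbert

section Shift

variable {H : Type*} [NormedAddCommGroup H] [InnerProductSpace ℂ H] [CompleteSpace H]

local notation "⟪" x ", " y "⟫" => @inner ℂ _ _ x y

variable (S : H →L[ℂ] H) (e : HilbertBasis ℕ ℂ H) (ω : ℕ → ℝ)

lemma shift_pow_apply (hS : ∀ n, S (e n) = (ω n : ℂ) • e (n + 1)) :
    ∀ (n k : ℕ), (S ^ n) (e k) = ((∏ i ∈ range n, ω (k + i) : ℝ) : ℂ) • e (k + n) := by
  intro n
  induction n with
  | zero => intro k; simp
  | succ n ih =>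
    intro k
    rw [pow_succ, ContinuousLinearMap.mul_apply, hS k, map_smul, ih (k + 1)]
    rw [smul_smul]
    have hprod : (∏ i ∈ range (n + 1), ω (k + i)) = ω k * ∏ i ∈ range n, ω (k + 1 + i) := by
      rw [prod_range_succ']
      rw [mul_comm]
      congr 1
      exact prod_congr rfl fun i _ => by congr 1; omega
    have hidx : k + 1 + n = k + (n + 1) := by omega
    rw [hidx, hprod]
    congr 1
    push_cast
    ring

lemma shift_inner_pow (hS : ∀ n, S (e n) = (ω n : ℂ) • e (n + 1)) (k n : ℕ) (x : H) :
    ⟪e (k + n), (S ^ n) x⟫ = ((∏ i ∈ range n, ω (k + i) : ℝ) : ℂ) * ⟪e k, x⟫ := by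
  have key : (innerSL ℂ (e (k + n))).comp (S ^ n) =
      ((∏ i ∈ range n, ω (k + i) : ℝ) : ℂ) • innerSL ℂ (e k) := by
    refine ContinuousLinearMap.ext_on (aux_dense_span e) ?_
    rintro _ ⟨j, rfl⟩
    simp only [ContinuousLinearMap.comp_apply, innerSL_apply_apply, ContinuousLinearMap.smul_apply]
    rw [shift_pow_apply S e ω hS n j, inner_smul_right, aux_inner_basis, aux_inner_basis]
    by_cases hjk : j = k
    · subst hjk; simp
    · rw [if_neg (by omega), if_neg (by omega)]
      simp
  have := congrArg (fun f : H →L[ℂ] ℂ => f x) key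
  simpa using this

/-- Powers of `S - μ` applied to a basis vector: leading term plus higher terms. -/
lemma shift_sub_pow_apply (hS : ∀ n, S (e n) = (ω n : ℂ) • e (n + 1)) (μ : ℂ) :
    ∀ n j : ℕ, ∃ y ∈ Submodule.span ℂ (e '' Set.Ioc j (j + n)),
      ((S - μ • (1 : H →L[ℂ] H)) ^ n) (e j) = (-μ) ^ n • e j + y := by
  intro n
  induction n with
  | zero => intro j; exact ⟨0, Submodule.zero_mem _, by simp⟩
  | succ n ih =>
    intro j
    obtain ⟨y, hy, hrepr⟩ := ih j
    set T := S - μ • (1 : H →L[ℂ] H) with hT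
    have hTj : ∀ m, T (e m) = (ω m : ℂ) • e (m + 1) - μ • e m := by
      intro m
      simp [hT, ContinuousLinearMap.sub_apply, hS m]
    have hmono : Submodule.span ℂ (e '' Set.Ioc j (j + n)) ≤
        Submodule.span ℂ (e '' Set.Ioc j (j + (n + 1))) := by
      refine Submodule.span_mono (Set.image_mono ?_)
      exact Set.Ioc_subset_Ioc le_rfl (by omega)
    have hTy : T y ∈ Submodule.span ℂ (e '' Set.Ioc j (j + (n + 1))) := by
      refine Submodule.span_induction ?_ ?_ ?_ ?_ hy
      · rintro _ ⟨m, hm, rfl⟩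
        rw [Set.mem_Ioc] at hm
        obtain ⟨hm1, hm2⟩ := hm
        rw [hTj m]
        refine sub_mem ?_ ?_
        · exact Submodule.smul_mem _ _ (Submodule.subset_span
            ⟨m + 1, Set.mem_Ioc.mpr ⟨by omega, by omega⟩, rfl⟩)
        · exact Submodule.smul_mem _ _ (Submodule.subset_span
            ⟨m, Set.mem_Ioc.mpr ⟨by omega, by omega⟩, rfl⟩)
      · simp
      · intro a b _ _ ha hb
        rw [map_add]; exact add_mem ha hb
      · intro c a _ ha
        rw [map_smul]; exact Submodule.smul_mem _ _ ha
    refine ⟨((-μ) ^ n * (ω j : ℂ)) • e (j + 1) + T y, ?_, ?_⟩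
    · refine add_mem ?_ hTy
      exact Submodule.smul_mem _ _ (Submodule.subset_span
        ⟨j + 1, Set.mem_Ioc.mpr ⟨by omega, by omega⟩, rfl⟩)
    · rw [pow_succ', ContinuousLinearMap.mul_apply, hrepr, map_add, map_smul, hTj j]
      rw [smul_sub, smul_smul, smul_smul]
      have hcoef : (-μ) ^ (n + 1) = -((-μ) ^ n * μ) := by ring
      rw [hcoef]
      module

/-- If the first `k` coordinates of `x` vanish then
`⟪e k, (S-μ)^n x⟫ = (-μ)^n ⟪e k, x⟫`. -/
lemma shift_sub_inner_pow (hS : ∀ n, S (e n) = (ω n : ℂ) • e (n + 1)) (μ : ℂ) (k n : ℕ)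
    (x : H) (hx : ∀ j, j < k → ⟪e j, x⟫ = 0) :
    ⟪e k, ((S - μ • (1 : H →L[ℂ] H)) ^ n) x⟫ = (-μ) ^ n * ⟪e k, x⟫ := by
  set T := S - μ • (1 : H →L[ℂ] H) with hT
  set s : Set H := e '' Set.Ici k with hs
  -- x is in the closure of the span of {e j : j ≥ k}
  have hxcl : x ∈ closure (Submodule.span ℂ s : Set H) := by
    refine mem_closure_of_tendsto (e.hasSum_repr x) (Eventually.of_forall ?_)
    intro t
    simp only [SetLike.mem_coe]
    refine sum_mem ?_
    rintro i -
    rcases lt_or_ge i k with hik | hik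
    · rw [e.repr_apply_apply, hx i hik, zero_smul]
      exact Submodule.zero_mem _
    · exact Submodule.smul_mem _ _ (Submodule.subset_span ⟨i, hik, rfl⟩)
  -- the two functionals agree on s
  have heq : Set.EqOn (⇑((innerSL ℂ (e k)).comp (T ^ n)))
      (⇑((((-μ) ^ n) • innerSL ℂ (e k) : H →L[ℂ] ℂ))) s := by
    rintro _ ⟨j, hj, rfl⟩
    obtain ⟨y, hy, hrepr⟩ := shift_sub_pow_apply S e ω hS μ n j
    simp only [ContinuousLinearMap.comp_apply, innerSL_apply_apply, ContinuousLinearMap.smul_apply,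
      smul_eq_mul]
    rw [← hT] at hrepr
    rw [hrepr, inner_add_right, inner_smul_right]
    have hyk : ⟪e k, y⟫ = 0 := by
      have hker : Submodule.span ℂ (e '' Set.Ioc j (j + n)) ≤
          LinearMap.ker ((innerSL ℂ (e k) : H →L[ℂ] ℂ) : H →ₗ[ℂ] ℂ) := by
        rw [Submodule.span_le]
        rintro _ ⟨m, hm, rfl⟩
        simp only [SetLike.mem_coe, LinearMap.mem_ker, ContinuousLinearMap.coe_coe,
          innerSL_apply_apply]
        rw [aux_inner_basis e, if_neg]
        have : j < m := hm.1
        have : k ≤ j := hj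
        omega
      have := hker hy
      simpa using this
    rw [hyk, add_zero]
  -- extend equality to the closure of the span
  have heq2 := ContinuousLinearMap.eqOn_closure_span heq
  have := heq2 hxcl
  simpa using this

end Shift

section Main

variable {H : Type*} [NormedAddCommGroup H] [InnerProductSpace ℂ H] [CompleteSpace H]

local notation "⟪" x ", " y "⟫" => @inner ℂ _ _ x y

variable (S : H →L[ℂ] H) (e : HilbertBasis ℕ ℂ H) (ω : ℕ → ℝ)

/-- For `μ ≠ 0`, the quasi-nilpotent part of `S - μ` is trivial. -/
lemma qnp_sub_eq_singleton (hS : ∀ n, S (e n) = (ω n : ℂ) • e (n + 1)) {μ : ℂ} (hμ : μ ≠ 0) :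
    quasiNilpotentPart (S - μ • (1 : H →L[ℂ] H)) = {0} := by
  set T := S - μ • (1 : H →L[ℂ] H) with hT
  apply Set.eq_singleton_iff_unique_mem.mpr
  refine ⟨aux_zero_mem T, ?_⟩
  intro x hx
  refine aux_eq_zero e ?_
  intro k
  induction k using Nat.strong_induction_on with
  | _ k ih =>
  by_contra hxk
  have hkey : ∀ n : ℕ, ‖μ‖ ^ n * ‖⟪e k, x⟫‖ ≤ ‖(T ^ n) x‖ := by
    intro n
    have h1 := shift_sub_inner_pow S e ω hS μ k n x (fun j hj => ih j hj)
    rw [← hT] at h1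
    calc ‖μ‖ ^ n * ‖⟪e k, x⟫‖ = ‖(-μ) ^ n * ⟪e k, x⟫‖ := by
          rw [norm_mul, norm_pow, norm_neg]
      _ = ‖⟪e k, (T ^ n) x⟫‖ := by rw [h1]
      _ ≤ ‖e k‖ * ‖(T ^ n) x‖ := norm_inner_le_norm _ _
      _ = ‖(T ^ n) x‖ := by rw [e.orthonormal.1 k, one_mul]
  -- take n-th roots and limits
  have hxknorm : (0:ℝ) < ‖⟪e k, x⟫‖ := norm_pos_iff.mpr hxk
  have hle : ∀ᶠ n : ℕ in atTop,
      ‖μ‖ * ‖⟪e k, x⟫‖ ^ ((n : ℝ)⁻¹) ≤ ‖(T ^ n) x‖ ^ ((n : ℝ)⁻¹) := by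
    filter_upwards [eventually_ge_atTop 1] with n hn
    have := Real.rpow_le_rpow (by positivity) (hkey n) (by positivity : (0:ℝ) ≤ (n:ℝ)⁻¹)
    rwa [Real.mul_rpow (by positivity) (norm_nonneg _),
      aux_pow_rpow (norm_nonneg μ) (by omega)] at this
  have hlhs : Tendsto (fun n : ℕ => ‖μ‖ * ‖⟪e k, x⟫‖ ^ ((n : ℝ)⁻¹)) atTop (nhds ‖μ‖) := by
    have := (aux_rpow_inv_tendsto_one hxknorm).const_mul ‖μ‖
    simpa using this
  have : ‖μ‖ ≤ 0 := le_of_tendsto_of_tendsto hlhs hx hle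
  exact absurd this (not_le.mpr (norm_pos_iff.mpr hμ))

/-- If the quasi-nilpotent part of `S` contains a non-zero vector, then `r₃(S) = 0`. -/
lemma beta_tendsto_zero_of_mem (hpos : ∀ n, 0 < ω n)
    (hS : ∀ n, S (e n) = (ω n : ℂ) • e (n + 1)) {x : H}
    (hx : x ∈ quasiNilpotentPart S) (hx0 : x ≠ 0) :
    Tendsto (fun m : ℕ => (∏ i ∈ range m, ω i) ^ ((m : ℝ)⁻¹)) atTop (nhds 0) := by
  have hβ : ∀ m : ℕ, 0 < ∏ i ∈ range m, ω i := fun m => prod_pos fun i _ => hpos i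
  -- find a non-vanishing coordinate
  have hex : ∃ k, ⟪e k, x⟫ ≠ 0 := by
    by_contra hall
    push_neg at hall
    exact hx0 (aux_eq_zero e hall)
  obtain ⟨k, hk⟩ := hex
  have hxknorm : (0:ℝ) < ‖⟪e k, x⟫‖ := norm_pos_iff.mpr hk
  set P : ℕ → ℝ := fun n => ∏ i ∈ range n, ω (k + i) with hP
  have hPpos : ∀ n, 0 < P n := fun n => prod_pos fun i _ => hpos _
  have hkey : ∀ n : ℕ, P n * ‖⟪e k, x⟫‖ ≤ ‖(S ^ n) x‖ := by
    intro n
    have h1 := shift_inner_pow S e ω hS k n x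
    calc P n * ‖⟪e k, x⟫‖ = ‖((P n : ℝ) : ℂ) * ⟪e k, x⟫‖ := by
          rw [norm_mul, Complex.norm_real, Real.norm_of_nonneg (hPpos n).le]
      _ = ‖⟪e (k + n), (S ^ n) x⟫‖ := by rw [h1]
      _ ≤ ‖e (k + n)‖ * ‖(S ^ n) x‖ := norm_inner_le_norm _ _
      _ = ‖(S ^ n) x‖ := by rw [e.orthonormal.1 (k + n), one_mul]
  -- P n ^ (1/n) → 0
  have hPlim : Tendsto (fun n : ℕ => P n ^ ((n : ℝ)⁻¹)) atTop (nhds 0) := by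
    have hub : ∀ᶠ n : ℕ in atTop,
        P n ^ ((n : ℝ)⁻¹) ≤ ‖(S ^ n) x‖ ^ ((n : ℝ)⁻¹) * (‖⟪e k, x⟫‖ ^ ((n : ℝ)⁻¹))⁻¹ := by
      filter_upwards [eventually_ge_atTop 1] with n hn
      have h2 : P n ≤ ‖(S ^ n) x‖ / ‖⟪e k, x⟫‖ := by
        rw [le_div_iff₀ hxknorm]; exact hkey n
      have := Real.rpow_le_rpow (hPpos n).le h2 (by positivity : (0:ℝ) ≤ (n:ℝ)⁻¹)
      rwa [Real.div_rpow (norm_nonneg _) (norm_nonneg _), div_eq_mul_inv] at this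
    have hrlim : Tendsto (fun n : ℕ =>
        ‖(S ^ n) x‖ ^ ((n : ℝ)⁻¹) * (‖⟪e k, x⟫‖ ^ ((n : ℝ)⁻¹))⁻¹) atTop (nhds 0) := by
      have h3 := (aux_rpow_inv_tendsto_one hxknorm).inv₀ (by norm_num)
      have := hx.mul h3
      simpa using this
    exact squeeze_zero' (Eventually.of_forall fun n => (Real.rpow_nonneg (hPpos n).le _)) hub hrlim
  -- transfer to β
  have hβshift : Tendsto (fun n : ℕ => (∏ i ∈ range (k + n), ω i) ^ ((n : ℝ)⁻¹))
      atTop (nhds 0) := by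
    have heq : ∀ n : ℕ, (∏ i ∈ range (k + n), ω i) ^ ((n : ℝ)⁻¹)
        = (∏ i ∈ range k, ω i) ^ ((n : ℝ)⁻¹) * P n ^ ((n : ℝ)⁻¹) := by
      intro n
      rw [← Real.mul_rpow (hβ k).le (hPpos n).le, ← prod_range_add]
    rw [tendsto_congr heq]
    have := (aux_rpow_inv_tendsto_one (hβ k)).mul hPlim
    simpa using this
  exact (aux_shift hβ k).mp hβshift

/-- If `r₃(S) = 0` then the quasi-nilpotent part of `S` is dense. -/
lemma qnp_dense_of_beta (hpos : ∀ n, 0 < ω n)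
    (hS : ∀ n, S (e n) = (ω n : ℂ) • e (n + 1))
    (h : Tendsto (fun m : ℕ => (∏ i ∈ range m, ω i) ^ ((m : ℝ)⁻¹)) atTop (nhds 0)) :
    Dense (quasiNilpotentPart S) := by
  have hβ : ∀ m : ℕ, 0 < ∏ i ∈ range m, ω i := fun m => prod_pos fun i _ => hpos i
  have hspan : (Submodule.span ℂ (Set.range (e : ℕ → H)) : Set H) ⊆ quasiNilpotentPart S := by
    intro x hx
    refine Submodule.span_induction ?_ ?_ ?_ ?_ hx
    · rintro _ ⟨k, rfl⟩
      -- e k belongs to the quasi-nilpotent part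
      set P : ℕ → ℝ := fun n => ∏ i ∈ range n, ω (k + i) with hP
      have hPpos : ∀ n, 0 < P n := fun n => prod_pos fun i _ => hpos _
      have hnorm : ∀ n : ℕ, ‖(S ^ n) (e k)‖ = P n := by
        intro n
        rw [shift_pow_apply S e ω hS n k, norm_smul, e.orthonormal.1 (k + n), mul_one,
          Complex.norm_real, Real.norm_of_nonneg (hPpos n).le]
      show Tendsto _ _ _
      have heq : ∀ n : ℕ, ‖(S ^ n) (e k)‖ ^ ((n : ℝ)⁻¹)
          = (∏ i ∈ range (k + n), ω i) ^ ((n : ℝ)⁻¹) * ((∏ i ∈ range k, ω i) ^ ((n : ℝ)⁻¹))⁻¹ := by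
        intro n
        rw [hnorm n]
        have : P n = (∏ i ∈ range (k + n), ω i) / (∏ i ∈ range k, ω i) := by
          rw [eq_div_iff (hβ k).ne', mul_comm, ← prod_range_add]
        rw [this, Real.div_rpow (hβ _).le (hβ k).le, div_eq_mul_inv]
      rw [tendsto_congr heq]
      have h1 := (aux_shift hβ k).mpr h
      have h2 := (aux_rpow_inv_tendsto_one (hβ k)).inv₀ (by norm_num)
      have := h1.mul h2
      simpa using this
    · exact aux_zero_mem S
    · exact fun a b _ _ ha hb => aux_add_mem S ha hb
    · exact fun c a _ ha => aux_smul_mem S c ha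
  exact Dense.mono hspan (aux_dense_span e)

end Main

section Spectral

variable {H : Type*} [NormedAddCommGroup H] [InnerProductSpace ℂ H] [CompleteSpace H]

/-- Helper: a sequence that is eventually `≤ 1` is bounded above. -/
lemma aux_exists_ub (u : ℕ → ℝ) (h : ∀ᶠ n in atTop, u n ≤ 1) : ∃ C, ∀ n, u n ≤ C := by
  obtain ⟨N, hN⟩ := eventually_atTop.mp h
  refine ⟨max 1 ((Finset.range (N + 1)).sup' ⟨0, by simp⟩ u), fun n => ?_⟩
  rcases le_or_gt N n with hn | hn
  · exact le_max_of_le_left (hN n hn)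
  · exact le_max_of_le_right (Finset.le_sup' u (by simp [Finset.mem_range]; omega))

/-- If `‖Tⁿ x‖^(1/n) → 0` for every `x`, then the spectrum of `T` is `{0}`. -/
lemma aux_spectrum_eq_singleton [Nontrivial H] (T : H →L[ℂ] H)
    (h : ∀ x : H, Tendsto (fun n : ℕ => ‖(T ^ n) x‖ ^ ((n : ℝ)⁻¹)) atTop (nhds 0)) :
    spectrum ℂ T = {0} := by
  have hnt : Nontrivial (H →L[ℂ] H) := by
    obtain ⟨v, hv⟩ := exists_ne (0 : H)
    refine ⟨1, 0, fun hc => hv ?_⟩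
    have := congrArg (fun f : H →L[ℂ] H => f v) hc
    simpa using this
  -- first: spectral radius is 0
  have hrad : spectralRadius ℂ T = 0 := by
    refine le_antisymm ?_ zero_le
    refine ENNReal.le_of_forall_pos_le_add fun ε hε _ => ?_
    rw [zero_add]
    refine le_trans (spectrum.spectralRadius_le_liminf_pow_nnnorm_pow_one_div ℂ T) ?_
    refine le_trans (liminf_le_limsup) ?_
    refine limsup_le_of_le (by isBoundedDefault) ?_
    -- find eventual bound `‖Tⁿ‖^(1/n) ≤ ε`
    set c : ℝ := (ε : ℝ) / 2 with hc
    have hcpos : 0 < c := by positivity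
    have hbdd : ∀ x : H, ∃ C, ∀ n : ℕ, ‖(((c : ℂ)⁻¹) ^ n • (T ^ n)) x‖ ≤ C := by
      intro x
      refine aux_exists_ub _ ?_
      have hev := (h x).eventually_le_const hcpos
      filter_upwards [hev, eventually_ge_atTop 1] with n hn hn1
      have hTn : ‖(T ^ n) x‖ ≤ c ^ n := by
        have := pow_le_pow_left₀ (Real.rpow_nonneg (norm_nonneg _) _) hn n
        rwa [aux_rpow_inv_pow (norm_nonneg _) (by omega)] at this
      have hnorm : ‖(((c : ℂ)⁻¹) ^ n • (T ^ n)) x‖ = (c⁻¹) ^ n * ‖(T ^ n) x‖ := by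
        rw [ContinuousLinearMap.smul_apply, norm_smul, norm_pow, norm_inv,
          Complex.norm_real, Real.norm_of_nonneg hcpos.le]
      rw [hnorm, inv_pow]
      rw [inv_mul_le_iff₀ (by positivity), mul_one]
      exact hTn
    obtain ⟨C, hC⟩ := banach_steinhaus hbdd
    have hCnorm : ∀ n : ℕ, ‖T ^ n‖ ≤ max C 1 * c ^ n := by
      intro n
      have h1 : T ^ n = (c : ℂ) ^ n • (((c : ℂ)⁻¹) ^ n • (T ^ n)) := by
        rw [smul_smul, ← mul_pow, mul_inv_cancel₀ (by exact_mod_cast hcpos.ne'), one_pow,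
          one_smul]
      calc ‖T ^ n‖ = ‖(c : ℂ) ^ n‖ * ‖((c : ℂ)⁻¹) ^ n • (T ^ n)‖ := by rw [← norm_smul, ← h1]
        _ ≤ c ^ n * max C 1 := by
            refine mul_le_mul_of_nonneg ?_ (le_trans (hC n) (le_max_left _ _)) ?_ ?_
            · rw [norm_pow, Complex.norm_real, Real.norm_of_nonneg hcpos.le]
            · positivity
            · positivity
        _ = max C 1 * c ^ n := by ring
    -- hence eventually `‖Tⁿ‖^(1/n) ≤ 2c = ε`
    have hev2 : ∀ᶠ n : ℕ in atTop, ‖T ^ n‖ ^ ((n : ℝ)⁻¹) ≤ (ε : ℝ) := by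
      have hm : Tendsto (fun n : ℕ => (max C 1) ^ ((n : ℝ)⁻¹) * c) atTop (nhds c) := by
        have := (aux_rpow_inv_tendsto_one (lt_of_lt_of_le one_pos (le_max_right C 1))).mul_const c
        simpa using this
      have hev3 : ∀ᶠ n : ℕ in atTop, (max C 1) ^ ((n : ℝ)⁻¹) * c ≤ (ε : ℝ) := by
        refine hm.eventually_le_const ?_
        rw [hc]; linarith
      filter_upwards [hev3, eventually_ge_atTop 1] with n hn hn1
      refine le_trans ?_ hn
      have := Real.rpow_le_rpow (norm_nonneg _) (hCnorm n) (by positivity : (0:ℝ) ≤ (n:ℝ)⁻¹)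
      rwa [Real.mul_rpow (by positivity) (by positivity),
        aux_pow_rpow hcpos.le (by omega)] at this
    filter_upwards [hev2, eventually_ge_atTop 1] with n hn hn1
    -- translate the real bound into `ℝ≥0∞`
    have h0 : ((‖T ^ n‖₊ : ENNReal) ^ (1 / (n:ℝ))) ≤ ENNReal.ofReal (‖T ^ n‖ ^ ((n : ℝ)⁻¹)) := by
      rw [← ENNReal.ofReal_rpow_of_nonneg (norm_nonneg _) (by positivity), one_div]
      simp [ENNReal.ofReal, norm_toNNReal]
    refine le_trans h0 ?_
    calc ENNReal.ofReal (‖T ^ n‖ ^ ((n : ℝ)⁻¹)) ≤ ENNReal.ofReal (ε : ℝ) :=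
          ENNReal.ofReal_le_ofReal hn
      _ = (ε : ENNReal) := by simp [ENNReal.ofReal_coe_nnreal]
  -- conclude
  have hsub : spectrum ℂ T ⊆ {0} := by
    intro z hz
    have hle : (‖z‖₊ : ENNReal) ≤ spectralRadius ℂ T := by
      exact le_iSup₂ (f := fun k (_ : k ∈ spectrum ℂ T) => (‖k‖₊ : ENNReal)) z hz
    rw [hrad] at hle
    have : ‖z‖₊ = 0 := by simpa using hle
    simpa [nnnorm_eq_zero] using this
  obtain ⟨z, hz⟩ := spectrum.nonempty T
  have hz0 : z = 0 := hsub hz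
  refine Set.Subset.antisymm hsub ?_
  intro w hw
  rw [Set.mem_singleton_iff] at hw
  rw [hw, ← hz0]
  exact hz

/-- If the spectrum is `{0}` then `‖Tⁿ x‖^(1/n) → 0` for every `x`. -/
lemma aux_tendsto_of_spectrum (T : H →L[ℂ] H) (hσ : spectrum ℂ T = {0}) :
    ∀ x : H, Tendsto (fun n : ℕ => ‖(T ^ n) x‖ ^ ((n : ℝ)⁻¹)) atTop (nhds 0) := by
  have hrad : spectralRadius ℂ T = 0 := by
    unfold spectralRadius
    rw [hσ]
    simp
  have hgel := spectrum.pow_norm_pow_one_div_tendsto_nhds_spectralRadius T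
  rw [hrad] at hgel
  have hreal : Tendsto (fun n : ℕ => ‖T ^ n‖ ^ ((n : ℝ)⁻¹)) atTop (nhds 0) := by
    have hcont := (ENNReal.tendsto_toReal (by simp : (0 : ENNReal) ≠ ⊤)).comp hgel
    simp only [ENNReal.toReal_zero] at hcont
    refine hcont.congr fun n => ?_
    simp only [Function.comp_apply, ENNReal.toReal_ofReal (Real.rpow_nonneg (norm_nonneg _) _)]
    rw [one_div]
  intro x
  have hub : ∀ n : ℕ, ‖(T ^ n) x‖ ^ ((n : ℝ)⁻¹)
      ≤ ‖T ^ n‖ ^ ((n : ℝ)⁻¹) * (max ‖x‖ 1) ^ ((n : ℝ)⁻¹) := by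
    intro n
    have h1 : ‖(T ^ n) x‖ ≤ ‖T ^ n‖ * max ‖x‖ 1 := by
      refine le_trans ((T ^ n).le_opNorm x) ?_
      exact mul_le_mul_of_nonneg_left (le_max_left _ _) (norm_nonneg _)
    have := Real.rpow_le_rpow (norm_nonneg _) h1 (by positivity : (0:ℝ) ≤ (n:ℝ)⁻¹)
    rwa [Real.mul_rpow (norm_nonneg _) (by positivity)] at this
  have hlim : Tendsto (fun n : ℕ => ‖T ^ n‖ ^ ((n : ℝ)⁻¹) * (max ‖x‖ 1) ^ ((n : ℝ)⁻¹))
      atTop (nhds 0) := by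
    have h2 := aux_rpow_inv_tendsto_one (lt_of_lt_of_le one_pos (le_max_right ‖x‖ 1))
    have := hreal.mul h2
    simpa using this
  exact squeeze_zero (fun n => Real.rpow_nonneg (norm_nonneg _) _) hub hlim

end Spectral

section Limsup

lemma aux_limsup_facts (ω : ℕ → ℝ) (hpos : ∀ n, 0 < ω n) (M : ℝ) (hM : ∀ n, ω n ≤ M) :
    (0 ≤ atTop.limsup fun n : ℕ => (∏ i ∈ range n, ω i) ^ ((n : ℝ)⁻¹)) ∧
    ((atTop.limsup fun n : ℕ => (∏ i ∈ range n, ω i) ^ ((n : ℝ)⁻¹)) = 0 ↔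
      Tendsto (fun n : ℕ => (∏ i ∈ range n, ω i) ^ ((n : ℝ)⁻¹)) atTop (nhds 0)) := by
  set u : ℕ → ℝ := fun n => (∏ i ∈ range n, ω i) ^ ((n : ℝ)⁻¹) with hu
  have hMpos : 0 < M := lt_of_lt_of_le (hpos 0) (hM 0)
  have hub : ∀ n, u n ≤ max M 1 := by
    intro n
    rcases Nat.eq_zero_or_pos n with rfl | hn
    · simp only [hu, range_zero, prod_empty]
      rw [Nat.cast_zero, inv_zero, Real.rpow_zero]
      exact le_max_right _ _
    · have h1 : (∏ i ∈ range n, ω i) ≤ M ^ n := by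
        calc (∏ i ∈ range n, ω i) ≤ ∏ _i ∈ range n, M :=
              prod_le_prod (fun i _ => (hpos i).le) (fun i _ => hM i)
          _ = M ^ n := by rw [prod_const, card_range]
      have h2 := Real.rpow_le_rpow (prod_pos fun i _ => hpos i).le h1
        (by positivity : (0:ℝ) ≤ (n:ℝ)⁻¹)
      rw [aux_pow_rpow hMpos.le (by omega)] at h2
      exact le_trans h2 (le_max_left _ _)
  have hb0 : ∀ n, 0 ≤ u n := fun n => Real.rpow_nonneg (prod_pos fun i _ => hpos i).le _
  have hBle : IsBoundedUnder (· ≤ ·) atTop u :=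
    isBoundedUnder_of ⟨max M 1, hub⟩
  have hBge : IsBoundedUnder (· ≥ ·) atTop u :=
    isBoundedUnder_of ⟨0, hb0⟩
  have hliminf0 : 0 ≤ atTop.liminf u :=
    le_liminf_of_le hBle.isCoboundedUnder_ge (Eventually.of_forall hb0)
  have hle : atTop.liminf u ≤ atTop.limsup u := liminf_le_limsup hBle hBge
  refine ⟨le_trans hliminf0 hle, ?_, fun h => h.limsup_eq⟩
  intro h
  have hliminf : atTop.liminf u = 0 := le_antisymm (h ▸ hle) hliminf0
  exact tendsto_of_liminf_eq_limsup hliminf h hBle hBge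

end Limsup


variable {H : Type*} [NormedAddCommGroup H] [InnerProductSpace ℂ H] [CompleteSpace H]

/-- For an injective unilateral weighted shift `S` with positive bounded weights:
the quasi-nilpotent part `H₀(S)` is dense iff `r₃(S) = limsup (ω 0 ⋯ ω (n-1))^(1/n) = 0`;
and `S` has property (Q) iff either `S` is quasi-nilpotent or `r₃(S) > 0`. -/
theorem quasiNilpotentPart_dense_and_propertyQ (S : H →L[ℂ] H)
    (e : HilbertBasis ℕ ℂ H) (ω : ℕ → ℝ) (hpos : ∀ n, 0 < ω n)
    (hbd : ∃ M : ℝ, ∀ n, ω n ≤ M)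
    (hS : ∀ n, S (e n) = (ω n : ℂ) • e (n + 1)) :
    (Dense (quasiNilpotentPart S) ↔
      (atTop.limsup fun n : ℕ => (∏ i ∈ Finset.range n, ω i) ^ ((n : ℝ)⁻¹)) = 0) ∧
    (PropertyQ S ↔
      (spectrum ℂ S = {0} ∨
        0 < atTop.limsup fun n : ℕ => (∏ i ∈ Finset.range n, ω i) ^ ((n : ℝ)⁻¹))) := by
  obtain ⟨M, hM⟩ := hbd
  obtain ⟨hlimsup_nonneg, hlimsup_iff⟩ := aux_limsup_facts ω hpos M hM
  have he0 : (e 0 : H) ≠ 0 := by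
    intro hc
    have := e.orthonormal.1 0
    rw [hc, norm_zero] at this
    norm_num at this
  haveI : Nontrivial H := nontrivial_of_ne (e 0) 0 he0
  have hS0 : S - (0 : ℂ) • (1 : H →L[ℂ] H) = S := by simp
  -- if the quasinilpotent part has a nonzero element, limsup is 0
  have hkey : ∀ x ∈ quasiNilpotentPart S, x ≠ 0 →
      (atTop.limsup fun n : ℕ => (∏ i ∈ Finset.range n, ω i) ^ ((n : ℝ)⁻¹)) = 0 :=
    fun x hx hx0 =>
      (beta_tendsto_zero_of_mem S e ω hpos hS hx hx0).limsup_eq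
  constructor
  · constructor
    · intro hd
      by_contra hne
      have hsub : quasiNilpotentPart S ⊆ {0} := by
        intro x hx
        rw [Set.mem_singleton_iff]
        by_contra hx0
        exact hne (hkey x hx hx0)
      have hdense0 : Dense ({0} : Set H) := hd.mono hsub
      have : (e 0 : H) ∈ closure ({0} : Set H) := hdense0 _
      rw [isClosed_singleton.closure_eq] at this
      exact he0 this
    · intro h0
      exact qnp_dense_of_beta S e ω hpos hS (hlimsup_iff.mp h0)
  · constructor
    · intro hQ
      by_cases hr : 0 < atTop.limsup fun n : ℕ => (∏ i ∈ Finset.range n, ω i) ^ ((n : ℝ)⁻¹)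
      · exact Or.inr hr
      left
      have hr0 : (atTop.limsup fun n : ℕ => (∏ i ∈ Finset.range n, ω i) ^ ((n : ℝ)⁻¹)) = 0 :=
        le_antisymm (not_lt.mp hr) hlimsup_nonneg
      have hdense := qnp_dense_of_beta S e ω hpos hS (hlimsup_iff.mp hr0)
      have hclosed := hQ 0
      rw [hS0] at hclosed
      have huniv : quasiNilpotentPart S = Set.univ := by
        have := hclosed.closure_eq
        rw [hdense.closure_eq] at this
        exact this.symm
      refine aux_spectrum_eq_singleton S fun x => ?_
      have : x ∈ quasiNilpotentPart S := by rw [huniv]; trivial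
      exact this
    · rintro (hσ | hr) μ
      · rcases eq_or_ne μ 0 with rfl | hμ
        · rw [hS0]
          have huniv : quasiNilpotentPart S = Set.univ :=
            Set.eq_univ_of_forall (aux_tendsto_of_spectrum S hσ)
          rw [huniv]
          exact isClosed_univ
        · rw [qnp_sub_eq_singleton S e ω hS hμ]
          exact isClosed_singleton
      · rcases eq_or_ne μ 0 with rfl | hμ
        · rw [hS0]
          have hsing : quasiNilpotentPart S = {0} := by
            apply Set.eq_singleton_iff_unique_mem.mpr
            refine ⟨aux_zero_mem S, ?_⟩
            intro x hx
            by_contra hx0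
            exact hr.ne' (hkey x hx hx0)
          rw [hsing]
          exact isClosed_singleton
        · rw [qnp_sub_eq_singleton S e ω hS hμ]
          exact isClosed_singleton
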